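/- arXiv:1511.06323 — 3 statements merged into one kernel-verified Lean document; each statement's English description precedes it below -/
import Mathlib

section
/- In the SIR model, I(t) → 0 as t → ∞. -/
open Filter Topology

theorem sir_I_tendsto_zero
    (β μ : ℝ) (hβ : 0 < β) (hμ : 0 < μ)
    (S I R : ℝ → ℝ)
    (hS : ∀ t, 0 ≤ t → HasDerivAt S (-β * S t * I t) t)
    (hI : ∀ t, 0 ≤ t → HasDerivAt I (β * S t * I t - μ * I t) t)
    (hR : ∀ t, 0 ≤ t → HasDerivAt R (μ * I t) t)
    (hS0 : 0 < S 0) (hI0 : 0 < I 0) (hR0 : R 0 = 0)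
    (hSnn : ∀ t, 0 ≤ t → 0 ≤ S t) (hInn : ∀ t, 0 ≤ t → 0 ≤ I t)
    (hRb : ∀ t, 0 ≤ t → R t ≤ S 0 + I 0) :
    Tendsto I atTop (𝓝 0) := by
  set N : ℝ := S 0 + I 0 with hN
  -- R is monotone on [0,∞)
  have hRmono : MonotoneOn R (Set.Ici (0:ℝ)) := by
    apply monotoneOn_of_hasDerivWithinAt_nonneg (convex_Ici 0) (f' := fun t => μ * I t)
    · exact fun t ht => ((hR t ht).continuousAt).continuousWithinAt
    · intro t ht
      rw [interior_Ici] at ht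
      exact ((hR t (le_of_lt ht)).hasDerivWithinAt)
    · intro t ht
      rw [interior_Ici] at ht
      exact mul_nonneg hμ.le (hInn t ht.le)
  -- S is antitone on [0,∞)
  have hSanti : AntitoneOn S (Set.Ici (0:ℝ)) := by
    apply antitoneOn_of_hasDerivWithinAt_nonpos (convex_Ici 0) (f' := fun t => -β * S t * I t)
    · exact fun t ht => ((hS t ht).continuousAt).continuousWithinAt
    · intro t ht
      rw [interior_Ici] at ht
      exact ((hS t (le_of_lt ht)).hasDerivWithinAt)
    · intro t ht
      rw [interior_Ici] at ht
      have := mul_nonneg (mul_nonneg hβ.le (hSnn t ht.le)) (hInn t ht.le)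
      nlinarith
  -- conservation: S t + I t + R t = N for t ≥ 0
  have hcons : ∀ t, 0 ≤ t → S t + I t + R t = N := by
    intro t ht
    have key := constant_of_has_deriv_right_zero (f := fun u => S u + I u + R u) (a := 0) (b := t)
      (fun u hu => (((hS u hu.1).add (hI u hu.1)).add (hR u hu.1)).continuousAt.continuousWithinAt)
      (fun u hu => by
        have h := (((hS u hu.1).add (hI u hu.1)).add (hR u hu.1)).hasDerivWithinAt (s := Set.Ici u)
        convert h using 1
        · rfl
        · ring)
    have := key t ⟨ht, le_refl t⟩
    simpa [hR0, hN] using this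
  -- limits of R and S
  have hmaxnn : ∀ t : ℝ, (0:ℝ) ≤ max t 0 := fun t => le_max_right t 0
  set R' : ℝ → ℝ := fun t => R (max t 0) with hR'
  set S' : ℝ → ℝ := fun t => S (max t 0) with hS'
  have hR'mono : Monotone R' := fun a b hab => hRmono (hmaxnn a) (hmaxnn b) (max_le_max hab le_rfl)
  have hS'anti : Antitone S' := fun a b hab => hSanti (hmaxnn a) (hmaxnn b) (max_le_max hab le_rfl)
  have hR'bdd : BddAbove (Set.range R') := ⟨N, by rintro x ⟨t, rfl⟩; exact hRb _ (hmaxnn t)⟩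
  have hS'bdd : BddBelow (Set.range S') := ⟨0, by rintro x ⟨t, rfl⟩; exact hSnn _ (hmaxnn t)⟩
  have hRlim : Tendsto R' atTop (𝓝 (⨆ t, R' t)) := tendsto_atTop_ciSup hR'mono hR'bdd
  have hSlim : Tendsto S' atTop (𝓝 (⨅ t, S' t)) := tendsto_atTop_ciInf hS'anti hS'bdd
  set Ri : ℝ := ⨆ t, R' t
  set Si : ℝ := ⨅ t, S' t
  set c : ℝ := N - Si - Ri with hc
  -- I tends to c
  have hEq : ∀ᶠ t in atTop, N - S' t - R' t = I t := by
    filter_upwards [eventually_ge_atTop (0:ℝ)] with t ht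
    have hm : max t 0 = t := max_eq_left ht
    have := hcons t ht
    simp [hR', hS', hm]; linarith
  have hIlim : Tendsto I atTop (𝓝 c) := by
    have : Tendsto (fun t => N - S' t - R' t) atTop (𝓝 (N - Si - Ri)) :=
      ((tendsto_const_nhds.sub hSlim).sub hRlim)
    exact Tendsto.congr' hEq this
  -- c ≥ 0
  have hc0 : 0 ≤ c := by
    refine le_of_tendsto_of_tendsto tendsto_const_nhds hIlim ?_
    filter_upwards [eventually_ge_atTop (0:ℝ)] with t ht
    exact hInn t ht
  -- suppose c > 0, derive contradiction
  rcases eq_or_lt_of_le hc0 with h | h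
  · rwa [← h] at hIlim
  · exfalso
    set m : ℝ := μ * c / 2 with hm
    have hmpos : 0 < m := by positivity
    obtain ⟨T₀, hT₀⟩ := (hIlim.eventually (lt_mem_nhds (by linarith : c / 2 < c))).exists_forall_of_atTop
    set T : ℝ := max T₀ 0 with hT
    have hTnn : (0:ℝ) ≤ T := le_max_right _ _
    have hIge : ∀ t, T ≤ t → c / 2 ≤ I t := fun t ht =>
      (hT₀ t (le_trans (le_max_left _ _) ht)).le
    -- g := R - m * id is monotone on [T, ∞)
    have hg : MonotoneOn (fun t => R t - m * t) (Set.Ici T) := by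
      apply monotoneOn_of_hasDerivWithinAt_nonneg (convex_Ici T) (f' := fun t => μ * I t - m)
      · intro t ht
        exact (((hR t (le_trans hTnn ht)).sub ((hasDerivAt_id t).const_mul m)).continuousAt).continuousWithinAt
      · intro t ht
        rw [interior_Ici] at ht
        have := ((hR t (le_trans hTnn ht.le)).sub ((hasDerivAt_id t).const_mul m)).hasDerivWithinAt (s := interior (Set.Ici T))
        exact this.congr_deriv (by ring)
      · intro t ht
        rw [interior_Ici] at ht
        have := hIge t ht.le
        have : μ * (c/2) ≤ μ * I t := by nlinarith
        simp only [hm]; linarith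
    -- pick t large enough
    obtain ⟨t, ht⟩ : ∃ t : ℝ, t = T + (N + 1) / m := ⟨_, rfl⟩
    have hdivnn : 0 ≤ (N + 1) / m := by positivity
    have htT : T ≤ t := by rw [ht]; linarith
    have h2 : R T - m * T ≤ R t - m * t :=
      hg (le_refl T : T ∈ Set.Ici T) (htT : t ∈ Set.Ici T) htT
    have hRt : R T + m * (t - T) ≤ R t := by linarith
    have hmt : m * (t - T) = N + 1 := by
      rw [ht]; field_simp; ring
    have hRT0 : 0 ≤ R T := by
      have := hRmono (le_refl (0:ℝ) : (0:ℝ) ∈ Set.Ici (0:ℝ)) (by exact hTnn : T ∈ Set.Ici (0:ℝ)) hTnn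
      linarith [hR0 ▸ this]
    have hle : R t ≤ N := hRb t (le_trans hTnn htT)
    linarith
end

section
/- Uniqueness of S∞: the function g(x) := I₀ + S₀ - x + (μ/β) ln(x/S₀) has exactly one root in the open interval (0, S₀), given that I₀ > 0, S₀ > 0. -/
/-- No two distinct roots of `g` in `(0, S₀)`: strict concavity argument. -/
lemma sir_no_two_roots (c S₀ I₀ a b : ℝ) (hc : 0 < c) (hI₀ : 0 < I₀)
    (ha : a ∈ Set.Ioo 0 S₀) (hb : b ∈ Set.Ioo 0 S₀) (hab : a < b)
    (hga : I₀ + S₀ - a + c * Real.log (a / S₀) = 0)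
    (hgb : I₀ + S₀ - b + c * Real.log (b / S₀) = 0) : False := by
  obtain ⟨ha0, haS⟩ := ha
  obtain ⟨hb0, hbS⟩ := hb
  have hS0 : 0 < S₀ := lt_trans hb0 hbS
  have hd : 0 < S₀ - a := by linarith
  set p : ℝ := (S₀ - b) / (S₀ - a) with hp
  set q : ℝ := (b - a) / (S₀ - a) with hq
  have hp0 : 0 < p := div_pos (by linarith) hd
  have hq0 : 0 < q := div_pos (by linarith) hd
  have hpq : p + q = 1 := by rw [hp, hq]; field_simp; ring
  have hcomb : p • a + q • S₀ = b := by
    simp only [smul_eq_mul]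
    rw [hp, hq]
    field_simp
    ring
  have hne : a ≠ S₀ := ne_of_lt haS
  have hkey := strictConcaveOn_log_Ioi.2 (Set.mem_Ioi.mpr ha0)
    (Set.mem_Ioi.mpr hS0) hne hp0 hq0 hpq
  rw [hcomb] at hkey
  simp only [smul_eq_mul] at hkey
  -- clear denominators in hkey
  have hkey' : (S₀ - b) * Real.log a + (b - a) * Real.log S₀
      < (S₀ - a) * Real.log b := by
    have := mul_lt_mul_of_pos_left hkey hd
    rw [hp, hq] at this
    calc (S₀ - b) * Real.log a + (b - a) * Real.log S₀
        = (S₀ - a) * ((S₀ - b) / (S₀ - a) * Real.log a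
            + (b - a) / (S₀ - a) * Real.log S₀) := by
          field_simp
      _ < (S₀ - a) * Real.log b := this
  have hla : Real.log (a / S₀) = Real.log a - Real.log S₀ :=
    Real.log_div (ne_of_gt ha0) (ne_of_gt hS0)
  have hlb : Real.log (b / S₀) = Real.log b - Real.log S₀ :=
    Real.log_div (ne_of_gt hb0) (ne_of_gt hS0)
  rw [hla] at hga
  rw [hlb] at hgb
  -- multiply hkey' by c and substitute
  have h1 : c * ((S₀ - b) * Real.log a + (b - a) * Real.log S₀)
      < c * ((S₀ - a) * Real.log b) := by
    exact mul_lt_mul_of_pos_left hkey' hc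
  nlinarith [mul_lt_mul_of_pos_left hkey' hc,
    mul_pos (sub_pos.mpr hab) hI₀]

theorem sir_Sinf_unique_root
    (β μ S₀ I₀ : ℝ) (hβ : 0 < β) (hμ : 0 < μ)
    (hS₀ : 0 < S₀) (hI₀ : 0 < I₀) :
    ∃! x : ℝ, x ∈ Set.Ioo 0 S₀ ∧
      I₀ + S₀ - x + (μ / β) * Real.log (x / S₀) = 0 := by
  set c : ℝ := μ / β with hcdef
  have hc : 0 < c := div_pos hμ hβ
  set t : ℝ := (I₀ + S₀) / c with ht
  have ht0 : 0 < t := div_pos (by linarith) hc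
  set x₀ : ℝ := S₀ * Real.exp (-t) with hx₀
  have hx₀pos : 0 < x₀ := mul_pos hS₀ (Real.exp_pos _)
  have hx₀lt : x₀ < S₀ := by
    have : Real.exp (-t) < 1 := Real.exp_lt_one_iff.mpr (by linarith)
    calc x₀ = S₀ * Real.exp (-t) := rfl
      _ < S₀ * 1 := by exact mul_lt_mul_of_pos_left this hS₀
      _ = S₀ := mul_one S₀
  have hgx₀ : I₀ + S₀ - x₀ + c * Real.log (x₀ / S₀) < 0 := by
    have hdiv : x₀ / S₀ = Real.exp (-t) := by
      rw [hx₀]; field_simp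
    rw [hdiv, Real.log_exp]
    have : c * (-t) = -(I₀ + S₀) := by
      rw [ht]; field_simp
    rw [this]
    linarith
  have hgS : I₀ + S₀ - S₀ + c * Real.log (S₀ / S₀) = I₀ := by
    rw [div_self (ne_of_gt hS₀), Real.log_one]
    ring
  have hcont : ContinuousOn (fun x => I₀ + S₀ - x + c * Real.log (x / S₀))
      (Set.Icc x₀ S₀) := by
    apply ContinuousOn.add
    · exact (continuous_const.sub continuous_id).continuousOn
    · apply ContinuousOn.mul continuousOn_const
      apply ContinuousOn.log
      · exact (continuous_id.div_const S₀).continuousOn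
      · intro x hx
        have : 0 < x := lt_of_lt_of_le hx₀pos hx.1
        positivity
  have hmem : (0 : ℝ) ∈ Set.Ioo (I₀ + S₀ - x₀ + c * Real.log (x₀ / S₀))
      (I₀ + S₀ - S₀ + c * Real.log (S₀ / S₀)) := by
    constructor
    · exact hgx₀
    · rw [hgS]; exact hI₀
  obtain ⟨z, hz, hgz⟩ := intermediate_value_Ioo (le_of_lt hx₀lt) hcont hmem
  refine ⟨z, ⟨⟨lt_trans hx₀pos hz.1, hz.2⟩, hgz⟩, ?_⟩
  rintro y ⟨hy, hgy⟩
  by_contra hne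
  rcases lt_or_gt_of_ne hne with h | h
  · exact sir_no_two_roots c S₀ I₀ y z hc hI₀ hy ⟨lt_trans hx₀pos hz.1, hz.2⟩ h hgy hgz
  · exact sir_no_two_roots c S₀ I₀ z y hc hI₀ ⟨lt_trans hx₀pos hz.1, hz.2⟩ hy h hgz hgy
end

section
/- In the SEIR model, I(t) → 0 as t → ∞. -/
open Filter Topology

/-- A function antitone on `[0, ∞)` and nonnegative there converges at infinity. -/
lemma tendsto_of_antitoneOn_nonneg (F : ℝ → ℝ)
    (hA : AntitoneOn F (Set.Ici (0:ℝ))) (hB : ∀ t, 0 ≤ t → 0 ≤ F t) :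
    ∃ l, Tendsto F atTop (𝓝 l) := by
  set h : ℝ → ℝ := fun t => F (max t 0) with hh
  have hant : Antitone h := by
    intro s t hst
    exact hA (Set.mem_Ici.2 (le_max_right s 0)) (Set.mem_Ici.2 (le_max_right t 0))
      (max_le_max hst le_rfl)
  have hbdd : BddBelow (Set.range h) := by
    refine ⟨0, ?_⟩
    rintro x ⟨t, rfl⟩
    exact hB _ (le_max_right t 0)
  refine ⟨⨅ t, h t, ?_⟩
  have := tendsto_atTop_ciInf hant hbdd
  refine this.congr' ?_
  filter_upwards [eventually_ge_atTop (0:ℝ)] with t ht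
  simp [hh, max_eq_left ht]

theorem seir_I_tendsto_zero
    (β γ μ N : ℝ) (hβ : 0 < β) (hγ : 0 < γ) (hμ : 0 < μ)
    (S E I R : ℝ → ℝ)
    (hS : ∀ t, 0 ≤ t → HasDerivAt S (-β * S t * I t) t)
    (hE : ∀ t, 0 ≤ t → HasDerivAt E (β * S t * I t - γ * E t) t)
    (hI : ∀ t, 0 ≤ t → HasDerivAt I (γ * E t - μ * I t) t)
    (hR : ∀ t, 0 ≤ t → HasDerivAt R (μ * I t) t)
    (hS0 : 0 < S 0) (hE0 : 0 ≤ E 0) (hI0 : 0 < I 0) (hR0 : R 0 = 0)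
    (hN : N = S 0 + E 0 + I 0)
    (hSnn : ∀ t, 0 ≤ t → 0 ≤ S t ∧ S t ≤ N)
    (hEnn : ∀ t, 0 ≤ t → 0 ≤ E t ∧ E t ≤ N)
    (hInn : ∀ t, 0 ≤ t → 0 ≤ I t ∧ I t ≤ N)
    (hRnn : ∀ t, 0 ≤ t → 0 ≤ R t ∧ R t ≤ N) :
    Tendsto I atTop (𝓝 0) := by
  -- F = S + E + I has derivative -μ I ≤ 0 on [0,∞)
  set F : ℝ → ℝ := fun t => S t + E t + I t with hF
  set G : ℝ → ℝ := fun t => S t + E t with hG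
  have hFd : ∀ t, 0 ≤ t → HasDerivAt F (-(μ * I t)) t := by
    intro t ht
    have h := ((hS t ht).add (hE t ht)).add (hI t ht)
    exact h.congr_deriv (by ring)
  have hGd : ∀ t, 0 ≤ t → HasDerivAt G (-(γ * E t)) t := by
    intro t ht
    have h := (hS t ht).add (hE t ht)
    exact h.congr_deriv (by ring)
  have antiOf : ∀ (f : ℝ → ℝ) (g : ℝ → ℝ), (∀ t, 0 ≤ t → HasDerivAt f (-(g t)) t) →
      (∀ t, 0 ≤ t → 0 ≤ g t) → AntitoneOn f (Set.Ici (0:ℝ)) := by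
    intro f g hfd hg
    apply antitoneOn_of_deriv_nonpos (convex_Ici 0)
    · intro t ht
      exact (hfd t ht).continuousAt.continuousWithinAt
    · intro t ht
      rw [interior_Ici] at ht
      exact (hfd t ht.le).differentiableAt.differentiableWithinAt
    · intro t ht
      rw [interior_Ici] at ht
      rw [(hfd t ht.le).deriv]
      simpa using hg t ht.le
  have hFanti : AntitoneOn F (Set.Ici (0:ℝ)) :=
    antiOf F (fun t => μ * I t) hFd (fun t ht => mul_nonneg hμ.le (hInn t ht).1)
  have hGanti : AntitoneOn G (Set.Ici (0:ℝ)) :=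
    antiOf G (fun t => γ * E t) hGd (fun t ht => mul_nonneg hγ.le (hEnn t ht).1)
  obtain ⟨l₁, hl₁⟩ := tendsto_of_antitoneOn_nonneg F hFanti
    (fun t ht => by
      have := (hSnn t ht).1; have := (hEnn t ht).1; have := (hInn t ht).1
      simp only [hF]; linarith)
  obtain ⟨l₂, hl₂⟩ := tendsto_of_antitoneOn_nonneg G hGanti
    (fun t ht => by
      have := (hSnn t ht).1; have := (hEnn t ht).1
      simp only [hG]; linarith)
  -- I = F - G converges to L := l₁ - l₂
  have hIto : Tendsto I atTop (𝓝 (l₁ - l₂)) := by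
    have : Tendsto (fun t => F t - G t) atTop (𝓝 (l₁ - l₂)) := hl₁.sub hl₂
    refine this.congr (fun t => by simp [hF, hG])
  set L := l₁ - l₂ with hL
  have hLnn : 0 ≤ L := by
    refine ge_of_tendsto hIto ?_
    filter_upwards [eventually_ge_atTop (0:ℝ)] with t ht
    exact (hInn t ht).1
  -- Show L = 0
  have hLzero : L = 0 := by
    by_contra hne
    have hLpos : 0 < L := lt_of_le_of_ne hLnn (Ne.symm hne)
    -- eventually I t > L/2
    have hev : ∀ᶠ t in atTop, L / 2 < I t :=
      hIto.eventually (eventually_gt_nhds (by linarith))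
    obtain ⟨T₀, hT₀⟩ := eventually_atTop.1 hev
    set T := max T₀ 0 with hT
    have hTnn : (0:ℝ) ≤ T := le_max_right _ _
    -- H t := R t - μ*(L/2)*t is monotone on [T, ∞)
    set c := μ * (L / 2) with hc
    have hcpos : 0 < c := mul_pos hμ (by linarith)
    set H : ℝ → ℝ := fun t => R t - c * t with hH
    have hHmono : MonotoneOn H (Set.Ici T) := by
      apply monotoneOn_of_deriv_nonneg (convex_Ici T)
      · intro t ht
        have ht0 : 0 ≤ t := le_trans hTnn ht
        exact ((hR t ht0).sub ((hasDerivAt_id t).const_mul c)).continuousAt.continuousWithinAt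
      · intro t ht
        rw [interior_Ici] at ht
        have ht0 : 0 ≤ t := le_trans hTnn ht.le
        exact ((hR t ht0).sub
          ((hasDerivAt_id t).const_mul c)).differentiableAt.differentiableWithinAt
      · intro t ht
        rw [interior_Ici] at ht
        have ht0 : 0 ≤ t := le_trans hTnn ht.le
        have hd : HasDerivAt H (μ * I t - c) t := by
          have := (hR t ht0).sub ((hasDerivAt_id t).const_mul c)
          exact this.congr_deriv (by ring)
        rw [hd.deriv]
        have hIt : L / 2 < I t := hT₀ t (le_trans (le_max_left _ _) ht.le)
        have : c ≤ μ * I t := by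
          rw [hc]; exact mul_le_mul_of_nonneg_left hIt.le hμ.le
        linarith
    -- pick large t to contradict R ≤ N
    set t₁ := T + (N + 1) / c with ht₁
    have ht₁T : T ≤ t₁ := by
      have hNnn : 0 ≤ N := le_trans (hRnn 0 le_rfl).1 (hRnn 0 le_rfl).2
      have h2 : 0 ≤ (N + 1) / c := div_nonneg (by linarith) hcpos.le
      rw [ht₁]; linarith
    have ht₁0 : 0 ≤ t₁ := le_trans hTnn ht₁T
    have hHle : H T ≤ H t₁ := hHmono (Set.mem_Ici.2 le_rfl) (Set.mem_Ici.2 ht₁T) ht₁T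
    have hRT : 0 ≤ R T := (hRnn T hTnn).1
    have hRt₁ : R t₁ ≤ N := (hRnn t₁ ht₁0).2
    -- H T ≤ H t₁ means R t₁ ≥ R T + c * (t₁ - T) = R T + N + 1
    have hkey : c * (t₁ - T) = N + 1 := by
      rw [ht₁]; field_simp; ring
    simp only [hH] at hHle
    nlinarith [hHle, hkey]
  rw [hLzero] at hIto
  exact hIto
end
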